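/- Discrete Poincaré inequality: for every discrete function z on {0,...,N+1} with z_0 = z_{N+1} = 0, one has h·Σ_{j=1}^{N} z_j² ≤ 4·h·Σ_{j=0}^{N} ((∂_h^+ z)_j)², where (∂_h^+ z)_j = (z_{j+1}-z_j)/h. -/

import Mathlib

theorem stmt16 (N : ℕ) (h : ℝ) (hh : h = 1 / (N + 1)) (z : ℕ → ℝ)
    (hz0 : z 0 = 0) (hzN : z (N + 1) = 0) :
    h * ∑ j ∈ Finset.Icc 1 N, (z j) ^ 2 ≤
      4 * (h * ∑ j ∈ Finset.range (N + 1), ((z (j + 1) - z j) / h) ^ 2) := by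
  have hNpos : (0:ℝ) < (N:ℝ) + 1 := by positivity
  have hpos : 0 < h := by rw [hh]; positivity
  set a : ℕ → ℝ := fun i => z (i + 1) - z i with ha
  set S : ℝ := ∑ i ∈ Finset.range (N + 1), a i ^ 2 with hS
  have hSnn : 0 ≤ S := Finset.sum_nonneg fun i _ => sq_nonneg _
  -- z j = telescoping sum
  have htel : ∀ j, z j = ∑ i ∈ Finset.range j, a i := by
    intro j
    rw [Finset.sum_range_sub (f := z), hz0, sub_zero]
  -- pointwise bound
  have hbound : ∀ j ∈ Finset.Icc 1 N, z j ^ 2 ≤ ((N:ℝ) + 1) * S := by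
    intro j hj
    simp only [Finset.mem_Icc] at hj
    rw [htel j]
    calc (∑ i ∈ Finset.range j, a i) ^ 2
        ≤ (Finset.range j).card * ∑ i ∈ Finset.range j, a i ^ 2 :=
          sq_sum_le_card_mul_sum_sq
      _ ≤ ((N:ℝ) + 1) * S := by
          apply mul_le_mul
          · simp only [Finset.card_range]
            exact_mod_cast Nat.le_succ_of_le hj.2
          · exact Finset.sum_le_sum_of_subset_of_nonneg
              (Finset.range_subset_range.2 (by omega))
              (fun i _ _ => sq_nonneg _)
          · exact Finset.sum_nonneg fun i _ => sq_nonneg _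
          · positivity
  have hsum : ∑ j ∈ Finset.Icc 1 N, z j ^ 2 ≤ (N:ℝ) * (((N:ℝ) + 1) * S) := by
    calc ∑ j ∈ Finset.Icc 1 N, z j ^ 2
        ≤ ∑ j ∈ Finset.Icc 1 N, ((N:ℝ) + 1) * S := Finset.sum_le_sum hbound
      _ = (Finset.Icc 1 N).card * (((N:ℝ) + 1) * S) := by rw [Finset.sum_const, nsmul_eq_mul]
      _ = (N:ℝ) * (((N:ℝ) + 1) * S) := by rw [Nat.card_Icc]; norm_num
  -- rewrite RHS
  have hRHS : ∑ j ∈ Finset.range (N + 1), ((z (j + 1) - z j) / h) ^ 2 = S / h ^ 2 := by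
    rw [hS, Finset.sum_div]
    exact Finset.sum_congr rfl fun i _ => by rw [div_pow]
  rw [hRHS]
  have hh1 : h * ((N:ℝ) + 1) = 1 := by rw [hh]; field_simp
  calc h * ∑ j ∈ Finset.Icc 1 N, z j ^ 2
      ≤ h * ((N:ℝ) * (((N:ℝ) + 1) * S)) := by
        exact mul_le_mul_of_nonneg_left hsum hpos.le
    _ ≤ 4 * (h * (S / h ^ 2)) := by
        rw [div_eq_mul_inv, ← mul_assoc]
        have h4 : h * (S * (h ^ 2)⁻¹) = ((N:ℝ)+1) * S := by
          have hne : h ≠ 0 := hpos.ne'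
          field_simp [hh]
          linear_combination (-S) * hh1
        rw [h4]
        have hN1 : h * (N:ℝ) ≤ 1 := by
          calc h * (N:ℝ) ≤ h * ((N:ℝ)+1) := by nlinarith
            _ = 1 := hh1
        nlinarith [mul_nonneg hNpos.le hSnn]
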